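/- If complex numbers x, xb, xt, X, Xb, Xt satisfy the two coupled relations (q - p*x)*(p - Q*xt)/x = (PP - QQ*X)*(QQ' - PP*Xt)/Xt and (q - p*x)*(P - q*xb)/xb = (PP - QQ*X)*(QQ - PP'*Xb)/X, together with the lattice sine-Gordon equation for xbt: xbt/x = ((P - q*xb)/(q - P*xb))*((Q - p*xt)/(p - Q*xt)), then Xbt computed from the three cube paths is unique and equals Xbt = QQ'*(p - Q*xt)*((PP'² - QQ²)*(PP - QQ*X)*xb + QQ*(P - q*xb)*(q - p*x)*X) / (PP'*(P - q*xb)*((PP² - QQ'²)*(PP - QQ*X)*x + PP*(q - p*x)*(p - Q*xt))), and this Xbt satisfies the lattice sine-Gordon equation Xbt/X = ((PP' - QQ*Xb)/(QQ - PP'*Xb))*((QQ' - PP*Xt)/(PP - QQ'*Xt)). -/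
import Mathlib


/-- CAC property of the system (2.16): the value `Xbt` computed from the three
cube paths is the stated rational expression, and it satisfies the lattice
sine-Gordon equation; hence (2.16b)-(2.16c) is a CAC-type auto-Bäcklund
transformation of the lattice sine-Gordon equation. -/
theorem lsG_autoBT_CAC
    (x xb xt xbt X Xb Xt Xbt p P q Q PP PP' QQ QQ' lam : ℂ)
    (hPP : PP ^ 2 = p ^ 2 - lam) (hPP' : PP' ^ 2 = P ^ 2 - lam)
    (hQQ : QQ ^ 2 = q ^ 2 - lam) (hQQ' : QQ' ^ 2 = Q ^ 2 - lam)
    (hx : x ≠ 0) (hxb : xb ≠ 0) (hxt : xt ≠ 0) (hX : X ≠ 0) (hXt : Xt ≠ 0)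
    (h1 : q - P * xb ≠ 0) (h2 : p - Q * xt ≠ 0)
    (h3 : QQ - PP' * Xb ≠ 0) (h4 : PP - QQ' * Xt ≠ 0)
    (hden : PP' * (P - q * xb) *
      ((PP ^ 2 - QQ' ^ 2) * (PP - QQ * X) * x + PP * (q - p * x) * (p - Q * xt)) ≠ 0)
    (hB : (q - p * x) * (p - Q * xt) / x = (PP - QQ * X) * (QQ' - PP * Xt) / Xt)
    (hC : (q - p * x) * (P - q * xb) / xb = (PP - QQ * X) * (QQ - PP' * Xb) / X)
    (hlsG : xbt / x = ((P - q * xb) / (q - P * xb)) * ((Q - p * xt) / (p - Q * xt)))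
    (hval : Xbt = QQ' * (p - Q * xt) *
        ((PP' ^ 2 - QQ ^ 2) * (PP - QQ * X) * xb + QQ * (P - q * xb) * (q - p * x) * X) /
      (PP' * (P - q * xb) *
        ((PP ^ 2 - QQ' ^ 2) * (PP - QQ * X) * x + PP * (q - p * x) * (p - Q * xt)))) :
    Xbt / X = ((PP' - QQ * Xb) / (QQ - PP' * Xb)) * ((QQ' - PP * Xt) / (PP - QQ' * Xt)) := by
  have hPP'0 : PP' ≠ 0 := fun h => hden (by rw [h]; ring)
  have hb0 : P - q * xb ≠ 0 := by
    intro h; exact hden (by rw [h]; ring)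
  have hD : (PP ^ 2 - QQ' ^ 2) * (PP - QQ * X) * x + PP * (q - p * x) * (p - Q * xt) ≠ 0 := by
    intro h; exact hden (by rw [h]; ring)
  rw [div_eq_div_iff hx hXt] at hB
  rw [div_eq_div_iff hxb hX] at hC
  have ha : q - p * x ≠ 0 := by
    intro ha
    have hA : PP - QQ * X = 0 := by
      have h0 : (PP - QQ * X) * ((QQ - PP' * Xb) * xb) = 0 := by
        linear_combination (P - q * xb) * X * ha - hC
      rcases mul_eq_zero.1 h0 with h | h
      · exact h
      · exact absurd (mul_eq_zero.1 h) (by simp [h3, hxb])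
    exact hD (by rw [hA, ha]; ring)
  have e1 : (QQ' - PP * Xt) *
      ((PP ^ 2 - QQ' ^ 2) * (PP - QQ * X) * x + PP * (q - p * x) * (p - Q * xt)) =
      QQ' * (q - p * x) * (p - Q * xt) * (PP - QQ' * Xt) := by
    linear_combination -(PP ^ 2 - QQ' ^ 2) * hB
  have e2 : (PP' - QQ * Xb) * (PP' * (P - q * xb) * (q - p * x) * X) =
      (QQ - PP' * Xb) * ((PP' ^ 2 - QQ ^ 2) * (PP - QQ * X) * xb
        + QQ * (P - q * xb) * (q - p * x) * X) := by
    linear_combination (PP' ^ 2 - QQ ^ 2) * hC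
  rw [hval, div_mul_div_comm, div_eq_div_iff hX (mul_ne_zero h3 h4),
    div_mul_eq_mul_div, div_eq_iff (mul_ne_zero (mul_ne_zero hPP'0 hb0) hD)]
  linear_combination -QQ' * (p - Q * xt) * (PP - QQ' * Xt) * e2
    - X * (PP' - QQ * Xb) * PP' * (P - q * xb) * e1
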